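/- Weakness of the energy norm: For the components of the solution decomposition u = S + E + W (with E = E₁ + E₂ the boundary layers and W = W₁χ_{(0,1)} + W₂χ_{(1,2)} the inner layer) and the corresponding components of w = εu'', the energy norm satisfies |||(S,S̃)||| ≲ 1, |||(E,Ẽ)||| ≲ ε^{m−1/2}, and |||(W,W̃)||| ≲ ε^{5/2}; in particular the layer contributions vanish in the energy norm as ε → 0. -/

import Mathlib

open Set

/-- The L² norm of `f` over the interval `(a,b)`. -/
noncomputable def L2 (f : ℝ → ℝ) (a b : ℝ) : ℝ := Real.sqrt (∫ x in a..b, (f x)^2)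

/-- The square of the energy norm `|||(u,w)|||² = ‖w‖² + β²/2 ‖u'‖² + δ ‖u‖²`
on `Ω = (0,2)`. -/
noncomputable def energySq (β δ : ℝ) (u w : ℝ → ℝ) : ℝ :=
  (∫ x in (0:ℝ)..2, (w x)^2) + β^2/2 * (∫ x in (0:ℝ)..2, (deriv u x)^2)
    + δ * (∫ x in (0:ℝ)..2, (u x)^2)

/-- The bounds of the solution decomposition `u = S + E₁ + E₂ + W₁ + W₂`. -/
def SolDecompBounds (q m : ℕ) (β C₀ ε : ℝ) (S E₁ E₂ W₁ W₂ : ℝ → ℝ) : Prop :=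
  ∀ k : ℕ, k ≤ q + 1 →
    (L2 (iteratedDeriv k S) 0 1 + L2 (iteratedDeriv k S) 1 2 ≤ C₀) ∧
    (∀ x ∈ Ioo (0:ℝ) 2,
      |iteratedDeriv k E₁ x| ≤ C₀ * ε ^ ((m:ℝ) - (k:ℝ)) * Real.exp (-(β*x)/ε)) ∧
    (∀ x ∈ Ioo (0:ℝ) 2,
      |iteratedDeriv k E₂ x| ≤ C₀ * ε ^ ((m:ℝ) - (k:ℝ)) * Real.exp (-(β*(2-x))/ε)) ∧
    (∀ x ∈ Ioo (0:ℝ) 1,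
      |iteratedDeriv k W₁ x| ≤ C₀ * ε ^ ((3:ℝ) - (k:ℝ)) * Real.exp (-(β*(1-x))/ε)) ∧
    (∀ x ∈ Ioo (1:ℝ) 2,
      |iteratedDeriv k W₂ x| ≤ C₀ * ε ^ ((3:ℝ) - (k:ℝ)) * Real.exp (-(β*(x-1))/ε))

/-- The bounds of the decomposition `w = S̃ + Ẽ₁ + Ẽ₂ + W̃₁ + W̃₂` of `w = εu''`. -/
def TildeDecompBounds (q m : ℕ) (β C₀ ε : ℝ) (St E₁t E₂t W₁t W₂t : ℝ → ℝ) : Prop :=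
  ∀ k : ℕ, k ≤ q + 1 →
    (∀ x ∈ Ioo (0:ℝ) 1 ∪ Ioo 1 2, |iteratedDeriv k St x| ≤ C₀ * ε) ∧
    (∀ x ∈ Ioo (0:ℝ) 2,
      |iteratedDeriv k E₁t x| ≤ C₀ * ε ^ ((m:ℝ) - 1 - (k:ℝ)) * Real.exp (-(β*x)/ε)) ∧
    (∀ x ∈ Ioo (0:ℝ) 2,
      |iteratedDeriv k E₂t x| ≤ C₀ * ε ^ ((m:ℝ) - 1 - (k:ℝ)) * Real.exp (-(β*(2-x))/ε)) ∧
    (∀ x ∈ Ioo (0:ℝ) 1,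
      |iteratedDeriv k W₁t x| ≤ C₀ * ε ^ ((2:ℝ) - (k:ℝ)) * Real.exp (-(β*(1-x))/ε)) ∧
    (∀ x ∈ Ioo (1:ℝ) 2,
      |iteratedDeriv k W₂t x| ≤ C₀ * ε ^ ((2:ℝ) - (k:ℝ)) * Real.exp (-(β*(x-1))/ε))

section EnergyHelpers

open MeasureTheory

lemma sq_le_of_abs_le' {x A : ℝ} (h : |x| ≤ A) : x^2 ≤ A^2 := by
  nlinarith [abs_nonneg x, sq_abs x]

lemma exp_int_left {c : ℝ} (a b : ℝ) (hc : 0 < c) (_hab : a ≤ b) :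
    ∫ x in a..b, Real.exp (-(c*(x-a))) ≤ 1/c := by
  have hcne : c ≠ 0 := hc.ne'
  have hd : ∀ x ∈ uIcc a b, HasDerivAt (fun y => -(1/c) * Real.exp (-(c*(y-a))))
      (Real.exp (-(c*(x-a)))) x := by
    intro x _
    have h0 : HasDerivAt (fun y : ℝ => y - a) 1 x := (hasDerivAt_id x).sub_const a
    have h1 : HasDerivAt (fun y : ℝ => -(c*(y-a))) (-c) x := by
      simpa [neg_mul, mul_one] using h0.const_mul (-c)
    have h2 := (h1.exp).const_mul (-(1/c))
    refine h2.congr_deriv ?_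
    field_simp
  have hint : IntervalIntegrable (fun x => Real.exp (-(c*(x-a)))) volume a b :=
    (by continuity : Continuous fun x : ℝ => Real.exp (-(c*(x-a)))).intervalIntegrable a b
  rw [intervalIntegral.integral_eq_sub_of_hasDerivAt hd hint]
  rw [show -(c*(a-a)) = 0 by ring, Real.exp_zero]
  have h3 : 0 < 1/c := by positivity
  nlinarith [mul_pos h3 (Real.exp_pos (-(c*(b-a))))]

lemma exp_int_right {c : ℝ} (a b : ℝ) (hc : 0 < c) (_hab : a ≤ b) :
    ∫ x in a..b, Real.exp (-(c*(b-x))) ≤ 1/c := by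
  have hcne : c ≠ 0 := hc.ne'
  have hd : ∀ x ∈ uIcc a b, HasDerivAt (fun y => (1/c) * Real.exp (-(c*(b-y))))
      (Real.exp (-(c*(b-x)))) x := by
    intro x _
    have h0 : HasDerivAt (fun y : ℝ => b - y) (-1) x := (hasDerivAt_id x).const_sub b
    have h1 : HasDerivAt (fun y : ℝ => -(c*(b-y))) c x := by
      simpa [neg_mul, mul_neg, neg_neg, mul_one] using h0.const_mul (-c)
    have h2 := (h1.exp).const_mul (1/c)
    refine h2.congr_deriv ?_
    field_simp
  have hint : IntervalIntegrable (fun x => Real.exp (-(c*(b-x)))) volume a b :=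
    (by continuity : Continuous fun x : ℝ => Real.exp (-(c*(b-x)))).intervalIntegrable a b
  rw [intervalIntegral.integral_eq_sub_of_hasDerivAt hd hint]
  rw [show -(c*(b-b)) = 0 by ring, Real.exp_zero]
  have h3 : 0 < 1/c := by positivity
  nlinarith [mul_pos h3 (Real.exp_pos (-(c*(b-a))))]

lemma sqBound {g M : ℝ → ℝ} {a b : ℝ} (hab : a ≤ b)
    (hM : IntegrableOn M (Ioc a b)) (hMnn : ∀ x, 0 ≤ M x)
    (h : ∀ x ∈ Ioo a b, (g x)^2 ≤ M x) :
    ∫ x in a..b, (g x)^2 ≤ ∫ x in a..b, M x := by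
  rw [intervalIntegral.integral_of_le hab, intervalIntegral.integral_of_le hab]
  have hae : ∀ᵐ x ∂(volume.restrict (Ioc a b)), (g x)^2 ≤ M x := by
    rw [← Measure.restrict_congr_set Ioo_ae_eq_Ioc]
    exact (ae_restrict_iff' measurableSet_Ioo).2 (ae_of_all _ h)
  by_cases hg : IntegrableOn (fun x => (g x)^2) (Ioc a b)
  · exact integral_mono_ae hg hM hae
  · rw [integral_undef hg]
    exact integral_nonneg fun x => hMnn x

lemma split_02 {f : ℝ → ℝ} (hf : ∀ x, 0 ≤ f x) :
    ∫ x in (0:ℝ)..2, f x ≤ (∫ x in (0:ℝ)..1, f x) + ∫ x in (1:ℝ)..2, f x := by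
  by_cases h : IntervalIntegrable f volume 0 2
  · have h1 : IntervalIntegrable f volume 0 1 :=
      h.mono_set (uIcc_subset_uIcc (by norm_num [uIcc_of_le]) (by norm_num [uIcc_of_le]))
    have h2 : IntervalIntegrable f volume 1 2 :=
      h.mono_set (uIcc_subset_uIcc (by norm_num [uIcc_of_le]) (by norm_num [uIcc_of_le]))
    exact le_of_eq (intervalIntegral.integral_add_adjacent_intervals h1 h2).symm
  · rw [intervalIntegral.integral_undef h]
    have g1 : 0 ≤ ∫ x in (0:ℝ)..1, f x :=
      intervalIntegral.integral_nonneg (by norm_num) fun x _ => hf x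
    have g2 : 0 ≤ ∫ x in (1:ℝ)..2, f x :=
      intervalIntegral.integral_nonneg (by norm_num) fun x _ => hf x
    linarith

lemma piece_bound {g : ℝ → ℝ} {a b β ε A : ℝ} (hab : a ≤ b) (hβ : 0 < β) (hε : 0 < ε)
    (_hA : 0 ≤ A)
    (h : ∀ x ∈ Ioo a b, |g x| ≤ A * (Real.exp (-(β*(x-a))/ε) + Real.exp (-(β*(b-x))/ε))) :
    ∫ x in a..b, (g x)^2 ≤ 2*A^2 * (ε/β) := by
  set c := 2*β/ε with hcdef
  have hc : 0 < c := by positivity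
  have hMc : Continuous (fun x : ℝ => 2*A^2 * (Real.exp (-(c*(x-a))) + Real.exp (-(c*(b-x))))) := by
    continuity
  have key : ∫ x in a..b, (g x)^2 ≤
      ∫ x in a..b, 2*A^2 * (Real.exp (-(c*(x-a))) + Real.exp (-(c*(b-x)))) := by
    apply sqBound hab hMc.integrableOn_Ioc (fun x => by positivity)
    intro x hx
    have h1 := h x hx
    have e1 : Real.exp (-(β*(x-a))/ε) ^ 2 = Real.exp (-(c*(x-a))) := by
      rw [sq, ← Real.exp_add, hcdef]
      congr 1
      field_simp
      ring
    have e2 : Real.exp (-(β*(b-x))/ε) ^ 2 = Real.exp (-(c*(b-x))) := by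
      rw [sq, ← Real.exp_add, hcdef]
      congr 1
      field_simp
      ring
    have hg2 := sq_le_of_abs_le' h1
    nlinarith [hg2, e1, e2,
      sq_nonneg (A*Real.exp (-(β*(x-a))/ε) - A*Real.exp (-(β*(b-x))/ε))]
  have i1 : IntervalIntegrable (fun x => Real.exp (-(c*(x-a)))) volume a b :=
    (by continuity : Continuous fun x : ℝ => Real.exp (-(c*(x-a)))).intervalIntegrable a b
  have i2 : IntervalIntegrable (fun x => Real.exp (-(c*(b-x)))) volume a b :=
    (by continuity : Continuous fun x : ℝ => Real.exp (-(c*(b-x)))).intervalIntegrable a b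
  have comp : ∫ x in a..b, 2*A^2 * (Real.exp (-(c*(x-a))) + Real.exp (-(c*(b-x))))
      = 2*A^2 * ((∫ x in a..b, Real.exp (-(c*(x-a)))) + ∫ x in a..b, Real.exp (-(c*(b-x)))) := by
    rw [intervalIntegral.integral_const_mul, intervalIntegral.integral_add i1 i2]
  have hle : (∫ x in a..b, Real.exp (-(c*(x-a)))) + (∫ x in a..b, Real.exp (-(c*(b-x))))
      ≤ 1/c + 1/c := add_le_add (exp_int_left a b hc hab) (exp_int_right a b hc hab)
  have heq : 2*A^2 * (1/c + 1/c) = 2*A^2 * (ε/β) := by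
    rw [hcdef]
    field_simp
    ring
  calc ∫ x in a..b, (g x)^2 ≤ _ := key
    _ = _ := comp
    _ ≤ 2*A^2 * (1/c + 1/c) := by nlinarith [sq_nonneg A]
    _ = 2*A^2 * (ε/β) := heq

lemma piece_bound_const {g : ℝ → ℝ} {a b A : ℝ} (hab : a ≤ b) (_hA : 0 ≤ A)
    (h : ∀ x ∈ Ioo a b, |g x| ≤ A) :
    ∫ x in a..b, (g x)^2 ≤ A^2 * (b - a) := by
  have hM : IntegrableOn (fun _ : ℝ => A^2) (Ioc a b) :=
    integrableOn_const measure_Ioc_lt_top.ne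
  have := sqBound hab hM (fun _ => sq_nonneg A) (fun x hx => sq_le_of_abs_le' (h x hx))
  simpa [intervalIntegral.integral_const, smul_eq_mul, mul_comm] using this

lemma L2_sq_bound {f : ℝ → ℝ} {a b C : ℝ} (hab : a ≤ b)
    (h : Real.sqrt (∫ x in a..b, (f x)^2) ≤ C) :
    ∫ x in a..b, (f x)^2 ≤ C^2 := by
  have h0 : 0 ≤ ∫ x in a..b, (f x)^2 :=
    intervalIntegral.integral_nonneg hab fun x _ => sq_nonneg _
  calc ∫ x in a..b, (f x)^2 = Real.sqrt (∫ x in a..b, (f x)^2) ^ 2 := (Real.sq_sqrt h0).symm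
    _ ≤ C^2 := by nlinarith [Real.sqrt_nonneg (∫ x in a..b, (f x)^2)]

lemma sqrt_pow_le {X K r s C ε : ℝ} (hX : X ≤ K * ε ^ r) (hK : 0 ≤ K) (hε : 0 < ε)
    (hrs : r = 2*s) (hC : Real.sqrt K ≤ C) :
    Real.sqrt X ≤ C * ε ^ s := by
  have h1 : Real.sqrt X ≤ Real.sqrt (K * ε ^ r) := Real.sqrt_le_sqrt hX
  have h2 : Real.sqrt (K * ε ^ r) = Real.sqrt K * ε ^ s := by
    have h3 : Real.sqrt (ε ^ r) = ε ^ s := by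
      rw [Real.sqrt_eq_rpow, ← Real.rpow_mul hε.le, hrs]
      congr 1
      ring
    rw [Real.sqrt_mul hK, h3]
  rw [h2] at h1
  exact h1.trans (mul_le_mul_of_nonneg_right hC (Real.rpow_nonneg hε.le s))

end EnergyHelpers

set_option maxHeartbeats 2000000 in
/-- Weakness of the energy norm (Remark 1 of the paper): for the components of the
solution decomposition, `|||(S,S̃)||| ≲ 1`, `|||(E,Ẽ)||| ≲ ε^{m-1/2}` and
`|||(W,W̃)||| ≲ ε^{5/2}`, so the layer contributions vanish as `ε → 0`. -/
theorem weak_energy_norm_of_layers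
    (β δ : ℝ) (q m : ℕ) (hm : m = 1 ∨ m = 2) (hq : 1 ≤ q)
    (hβ : 0 < β) (hδ : 0 < δ) (C₀ : ℝ) (hC₀ : 0 < C₀) :
    ∃ C > 0, ∀ ε : ℝ, 0 < ε → ε ≤ 1 →
      ∀ S E₁ E₂ W₁ W₂ St E₁t E₂t W₁t W₂t : ℝ → ℝ,
      ContDiffOn ℝ (1:ℕ) S (Ioo 0 1) → ContDiffOn ℝ (1:ℕ) S (Ioo 1 2) →
      ContDiffOn ℝ (1:ℕ) E₁ (Ioo 0 2) → ContDiffOn ℝ (1:ℕ) E₂ (Ioo 0 2) →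
      ContDiffOn ℝ (1:ℕ) W₁ (Ioo 0 1) → ContDiffOn ℝ (1:ℕ) W₂ (Ioo 1 2) →
      SolDecompBounds q m β C₀ ε S E₁ E₂ W₁ W₂ →
      TildeDecompBounds q m β C₀ ε St E₁t E₂t W₁t W₂t →
      Real.sqrt (energySq β δ S St) ≤ C ∧
      Real.sqrt (energySq β δ (fun x => E₁ x + E₂ x) (fun x => E₁t x + E₂t x))
        ≤ C * ε ^ ((m:ℝ) - 1/2) ∧
      Real.sqrt (energySq β δ
          (fun x => Set.indicator (Ioo (0:ℝ) 1) W₁ x + Set.indicator (Ioo (1:ℝ) 2) W₂ x)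
          (fun x => Set.indicator (Ioo (0:ℝ) 1) W₁t x + Set.indicator (Ioo (1:ℝ) 2) W₂t x))
        ≤ C * ε ^ ((5:ℝ)/2) := by
  refine ⟨Real.sqrt (2*C₀^2*(1 + β^2/2 + δ)) + Real.sqrt ((2*C₀^2/β)*(1+δ) + β*C₀^2)
    + Real.sqrt ((4*C₀^2/β)*(1+δ) + 2*β*C₀^2), ?_, ?_⟩
  · have h1 : 0 < Real.sqrt (2*C₀^2*(1 + β^2/2 + δ)) := Real.sqrt_pos.2 (by positivity)
    have h2 := Real.sqrt_nonneg ((2*C₀^2/β)*(1+δ) + β*C₀^2)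
    have h3 := Real.sqrt_nonneg ((4*C₀^2/β)*(1+δ) + 2*β*C₀^2)
    linarith
  intro ε hε hε1 S E₁ E₂ W₁ W₂ St E₁t E₂t W₁t W₂t hS1c hS2c hE₁c hE₂c hW₁c hW₂c hSol hTil
  set KS := 2*C₀^2*(1 + β^2/2 + δ) with hKS
  set KE := (2*C₀^2/β)*(1+δ) + β*C₀^2 with hKE
  set KW := (4*C₀^2/β)*(1+δ) + 2*β*C₀^2 with hKW
  have sKSnn := Real.sqrt_nonneg KS
  have sKEnn := Real.sqrt_nonneg KE
  have sKWnn := Real.sqrt_nonneg KW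
  have hKEnn : 0 ≤ KE := by rw [hKE]; positivity
  have hKWnn : 0 ≤ KW := by rw [hKW]; positivity
  refine ⟨?_, ?_, ?_⟩
  · -- the smooth part S
    have hSt : ∫ x in (0:ℝ)..2, (St x)^2 ≤ 2*C₀^2 := by
      have hsplit := split_02 (f := fun x => (St x)^2) (fun x => sq_nonneg _)
      have b1 : ∫ x in (0:ℝ)..1, (St x)^2 ≤ (C₀*ε)^2 * (1 - 0) := by
        apply piece_bound_const (by norm_num) (by positivity)
        intro x hx
        simpa [iteratedDeriv_zero] using (hTil 0 (by omega)).1 x (Set.mem_union_left _ hx)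
      have b2 : ∫ x in (1:ℝ)..2, (St x)^2 ≤ (C₀*ε)^2 * (2 - 1) := by
        apply piece_bound_const (by norm_num) (by positivity)
        intro x hx
        simpa [iteratedDeriv_zero] using (hTil 0 (by omega)).1 x (Set.mem_union_right _ hx)
      have hε2 : ε^2 ≤ 1 := by nlinarith
      nlinarith [sq_nonneg C₀, hε2]
    have hL2 : ∀ k : ℕ, k ≤ q+1 → (∫ x in (0:ℝ)..2, (iteratedDeriv k S x)^2) ≤ 2*C₀^2 := by
      intro k hk
      have h0 := (hSol k hk).1
      have l1nn : 0 ≤ L2 (iteratedDeriv k S) 0 1 := Real.sqrt_nonneg _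
      have l2nn : 0 ≤ L2 (iteratedDeriv k S) 1 2 := Real.sqrt_nonneg _
      have l1 : Real.sqrt (∫ x in (0:ℝ)..1, (iteratedDeriv k S x)^2) ≤ C₀ := by
        have h : L2 (iteratedDeriv k S) 0 1 ≤ C₀ := by linarith
        exact h
      have l2 : Real.sqrt (∫ x in (1:ℝ)..2, (iteratedDeriv k S x)^2) ≤ C₀ := by
        have h : L2 (iteratedDeriv k S) 1 2 ≤ C₀ := by linarith
        exact h
      have j1 := L2_sq_bound (by norm_num) l1
      have j2 := L2_sq_bound (by norm_num) l2
      have hsplit := split_02 (f := fun x => (iteratedDeriv k S x)^2) (fun x => sq_nonneg _)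
      linarith
    have hS0 : ∫ x in (0:ℝ)..2, (S x)^2 ≤ 2*C₀^2 := by
      have h := hL2 0 (by omega)
      simpa [iteratedDeriv_zero] using h
    have hSd : ∫ x in (0:ℝ)..2, (deriv S x)^2 ≤ 2*C₀^2 := by
      have h := hL2 1 (by omega)
      simpa [iteratedDeriv_one] using h
    have hEn : energySq β δ S St ≤ KS := by
      simp only [energySq, hKS]
      nlinarith [mul_le_mul_of_nonneg_left hSd (by positivity : (0:ℝ) ≤ β^2/2),
        mul_le_mul_of_nonneg_left hS0 hδ.le, hSt]
    calc Real.sqrt (energySq β δ S St) ≤ Real.sqrt KS := Real.sqrt_le_sqrt hEn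
      _ ≤ _ := by linarith
  · -- the boundary layer part E
    have hw : ∫ x in (0:ℝ)..2, (E₁t x + E₂t x)^2 ≤ 2*(C₀*ε^((m:ℝ)-1))^2*(ε/β) := by
      apply piece_bound (by norm_num) hβ hε (by positivity)
      intro x hx
      have h1 := (hTil 0 (by omega)).2.1 x hx
      have h2 := (hTil 0 (by omega)).2.2.1 x hx
      simp only [iteratedDeriv_zero, Nat.cast_zero, sub_zero] at h1 h2
      rw [show x - (0:ℝ) = x from sub_zero x, mul_add]
      exact (abs_add_le _ _).trans (add_le_add h1 h2)
    have hd : ∫ x in (0:ℝ)..2, (deriv (fun x => E₁ x + E₂ x) x)^2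
        ≤ 2*(C₀*ε^((m:ℝ)-1))^2*(ε/β) := by
      apply piece_bound (by norm_num) hβ hε (by positivity)
      intro x hx
      have d1 : DifferentiableAt ℝ E₁ x :=
        (hE₁c.differentiableOn (by norm_num)).differentiableAt (isOpen_Ioo.mem_nhds hx)
      have d2 : DifferentiableAt ℝ E₂ x :=
        (hE₂c.differentiableOn (by norm_num)).differentiableAt (isOpen_Ioo.mem_nhds hx)
      have h1 := (hSol 1 (by omega)).2.1 x hx
      have h2 := (hSol 1 (by omega)).2.2.1 x hx
      simp only [iteratedDeriv_one, Nat.cast_one] at h1 h2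
      rw [deriv_fun_add d1 d2, show x - (0:ℝ) = x from sub_zero x, mul_add]
      exact (abs_add_le _ _).trans (add_le_add h1 h2)
    have hu : ∫ x in (0:ℝ)..2, (E₁ x + E₂ x)^2 ≤ 2*(C₀*ε^((m:ℝ)))^2*(ε/β) := by
      apply piece_bound (by norm_num) hβ hε (by positivity)
      intro x hx
      have h1 := (hSol 0 (by omega)).2.1 x hx
      have h2 := (hSol 0 (by omega)).2.2.1 x hx
      simp only [iteratedDeriv_zero, Nat.cast_zero, sub_zero] at h1 h2
      rw [show x - (0:ℝ) = x from sub_zero x, mul_add]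
      exact (abs_add_le _ _).trans (add_le_add h1 h2)
    have p1 : 2*(C₀*ε^((m:ℝ)-1))^2*(ε/β) = (2*C₀^2/β) * ε^(2*(m:ℝ)-1) := by
      rw [show (2*(m:ℝ)-1) = ((m:ℝ)-1) + (((m:ℝ)-1) + 1) by ring, Real.rpow_add hε,
        Real.rpow_add hε, Real.rpow_one]
      field_simp
    have p2 : 2*(C₀*ε^((m:ℝ)))^2*(ε/β) = (2*C₀^2/β) * ε^(2*(m:ℝ)+1) := by
      rw [show (2*(m:ℝ)+1) = (m:ℝ) + ((m:ℝ) + 1) by ring, Real.rpow_add hε,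
        Real.rpow_add hε, Real.rpow_one]
      field_simp
    have pc : ε^(2*(m:ℝ)+1) ≤ ε^(2*(m:ℝ)-1) :=
      Real.rpow_le_rpow_of_exponent_ge hε hε1 (by linarith)
    have hEn : energySq β δ (fun x => E₁ x + E₂ x) (fun x => E₁t x + E₂t x)
        ≤ KE * ε^(2*(m:ℝ)-1) := by
      simp only [energySq]
      rw [p1] at hw hd
      rw [p2] at hu
      have hu' : ∫ x in (0:ℝ)..2, (E₁ x + E₂ x)^2 ≤ (2*C₀^2/β) * ε^(2*(m:ℝ)-1) :=
        hu.trans (mul_le_mul_of_nonneg_left pc (by positivity))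
      have t2 := mul_le_mul_of_nonneg_left hd (by positivity : (0:ℝ) ≤ β^2/2)
      have t3 := mul_le_mul_of_nonneg_left hu' hδ.le
      have heq : (2*C₀^2/β) * ε^(2*(m:ℝ)-1) + β^2/2*((2*C₀^2/β) * ε^(2*(m:ℝ)-1))
          + δ*((2*C₀^2/β) * ε^(2*(m:ℝ)-1)) = KE * ε^(2*(m:ℝ)-1) := by
        rw [hKE]
        field_simp
        ring
      linarith
    exact sqrt_pow_le hEn hKEnn hε (by ring) (by linarith)
  · -- the interior layer part W
    have hG1 : ∫ x in (0:ℝ)..1,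
        (Set.indicator (Ioo (0:ℝ) 1) W₁t x + Set.indicator (Ioo (1:ℝ) 2) W₂t x)^2
        ≤ 2*(C₀*ε^((2:ℝ)))^2*(ε/β) := by
      apply piece_bound (by norm_num) hβ hε (by positivity)
      intro x hx
      have hx2 : x ∉ Ioo (1:ℝ) 2 := fun h => absurd hx.2 (not_lt.2 h.1.le)
      rw [Set.indicator_of_mem hx, Set.indicator_of_notMem hx2, add_zero]
      have h1 := (hTil 0 (by omega)).2.2.2.1 x hx
      simp only [iteratedDeriv_zero, Nat.cast_zero, sub_zero] at h1
      refine h1.trans ?_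
      rw [mul_add]
      exact le_add_of_nonneg_left (by positivity)
    have hG2 : ∫ x in (1:ℝ)..2,
        (Set.indicator (Ioo (0:ℝ) 1) W₁t x + Set.indicator (Ioo (1:ℝ) 2) W₂t x)^2
        ≤ 2*(C₀*ε^((2:ℝ)))^2*(ε/β) := by
      apply piece_bound (by norm_num) hβ hε (by positivity)
      intro x hx
      have hx1 : x ∉ Ioo (0:ℝ) 1 := fun h => absurd hx.1 (not_lt.2 h.2.le)
      rw [Set.indicator_of_mem hx, Set.indicator_of_notMem hx1, zero_add]
      have h1 := (hTil 0 (by omega)).2.2.2.2 x hx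
      simp only [iteratedDeriv_zero, Nat.cast_zero, sub_zero] at h1
      refine h1.trans ?_
      rw [mul_add]
      exact le_add_of_nonneg_right (by positivity)
    have hDF1 : ∀ x ∈ Ioo (0:ℝ) 1,
        deriv (fun y => Set.indicator (Ioo (0:ℝ) 1) W₁ y + Set.indicator (Ioo (1:ℝ) 2) W₂ y) x
          = deriv W₁ x := by
      intro x hx
      apply Filter.EventuallyEq.deriv_eq
      filter_upwards [isOpen_Ioo.mem_nhds hx] with y hy
      have hy2 : y ∉ Ioo (1:ℝ) 2 := fun h => absurd hy.2 (not_lt.2 h.1.le)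
      rw [Set.indicator_of_mem hy, Set.indicator_of_notMem hy2, add_zero]
    have hDF2 : ∀ x ∈ Ioo (1:ℝ) 2,
        deriv (fun y => Set.indicator (Ioo (0:ℝ) 1) W₁ y + Set.indicator (Ioo (1:ℝ) 2) W₂ y) x
          = deriv W₂ x := by
      intro x hx
      apply Filter.EventuallyEq.deriv_eq
      filter_upwards [isOpen_Ioo.mem_nhds hx] with y hy
      have hy1 : y ∉ Ioo (0:ℝ) 1 := fun h => absurd hy.1 (not_lt.2 h.2.le)
      rw [Set.indicator_of_mem hy, Set.indicator_of_notMem hy1, zero_add]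
    have hd1 : ∫ x in (0:ℝ)..1, (deriv (fun x => Set.indicator (Ioo (0:ℝ) 1) W₁ x
        + Set.indicator (Ioo (1:ℝ) 2) W₂ x) x)^2 ≤ 2*(C₀*ε^((2:ℝ)))^2*(ε/β) := by
      apply piece_bound (by norm_num) hβ hε (by positivity)
      intro x hx
      rw [hDF1 x hx]
      have h1 := (hSol 1 (by omega)).2.2.2.1 x hx
      simp only [iteratedDeriv_one, Nat.cast_one,
        show (3:ℝ)-1 = (2:ℝ) from by norm_num] at h1
      refine h1.trans ?_
      rw [mul_add]
      exact le_add_of_nonneg_left (by positivity)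
    have hd2 : ∫ x in (1:ℝ)..2, (deriv (fun x => Set.indicator (Ioo (0:ℝ) 1) W₁ x
        + Set.indicator (Ioo (1:ℝ) 2) W₂ x) x)^2 ≤ 2*(C₀*ε^((2:ℝ)))^2*(ε/β) := by
      apply piece_bound (by norm_num) hβ hε (by positivity)
      intro x hx
      rw [hDF2 x hx]
      have h1 := (hSol 1 (by omega)).2.2.2.2 x hx
      simp only [iteratedDeriv_one, Nat.cast_one,
        show (3:ℝ)-1 = (2:ℝ) from by norm_num] at h1
      refine h1.trans ?_
      rw [mul_add]
      exact le_add_of_nonneg_right (by positivity)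
    have hu1 : ∫ x in (0:ℝ)..1, (Set.indicator (Ioo (0:ℝ) 1) W₁ x
        + Set.indicator (Ioo (1:ℝ) 2) W₂ x)^2 ≤ 2*(C₀*ε^((3:ℝ)))^2*(ε/β) := by
      apply piece_bound (by norm_num) hβ hε (by positivity)
      intro x hx
      have hx2 : x ∉ Ioo (1:ℝ) 2 := fun h => absurd hx.2 (not_lt.2 h.1.le)
      rw [Set.indicator_of_mem hx, Set.indicator_of_notMem hx2, add_zero]
      have h1 := (hSol 0 (by omega)).2.2.2.1 x hx
      simp only [iteratedDeriv_zero, Nat.cast_zero, sub_zero] at h1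
      refine h1.trans ?_
      rw [mul_add]
      exact le_add_of_nonneg_left (by positivity)
    have hu2 : ∫ x in (1:ℝ)..2, (Set.indicator (Ioo (0:ℝ) 1) W₁ x
        + Set.indicator (Ioo (1:ℝ) 2) W₂ x)^2 ≤ 2*(C₀*ε^((3:ℝ)))^2*(ε/β) := by
      apply piece_bound (by norm_num) hβ hε (by positivity)
      intro x hx
      have hx1 : x ∉ Ioo (0:ℝ) 1 := fun h => absurd hx.1 (not_lt.2 h.2.le)
      rw [Set.indicator_of_mem hx, Set.indicator_of_notMem hx1, zero_add]
      have h1 := (hSol 0 (by omega)).2.2.2.2 x hx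
      simp only [iteratedDeriv_zero, Nat.cast_zero, sub_zero] at h1
      refine h1.trans ?_
      rw [mul_add]
      exact le_add_of_nonneg_right (by positivity)
    have q1 : 2*(C₀*ε^((2:ℝ)))^2*(ε/β) + 2*(C₀*ε^((2:ℝ)))^2*(ε/β) = (4*C₀^2/β)*ε^((5:ℝ)) := by
      rw [show (5:ℝ) = (2:ℝ) + ((2:ℝ) + 1) by norm_num, Real.rpow_add hε, Real.rpow_add hε,
        Real.rpow_one]
      field_simp
      ring
    have q2 : 2*(C₀*ε^((3:ℝ)))^2*(ε/β) + 2*(C₀*ε^((3:ℝ)))^2*(ε/β) = (4*C₀^2/β)*ε^((7:ℝ)) := by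
      rw [show (7:ℝ) = (3:ℝ) + ((3:ℝ) + 1) by norm_num, Real.rpow_add hε, Real.rpow_add hε,
        Real.rpow_one]
      field_simp
      ring
    have qc : ε^((7:ℝ)) ≤ ε^((5:ℝ)) :=
      Real.rpow_le_rpow_of_exponent_ge hε hε1 (by norm_num)
    have hGsplit := split_02
      (f := fun x => (Set.indicator (Ioo (0:ℝ) 1) W₁t x + Set.indicator (Ioo (1:ℝ) 2) W₂t x)^2)
      (fun x => sq_nonneg _)
    have hdsplit := split_02
      (f := fun x => (deriv (fun x => Set.indicator (Ioo (0:ℝ) 1) W₁ x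
        + Set.indicator (Ioo (1:ℝ) 2) W₂ x) x)^2)
      (fun x => sq_nonneg _)
    have husplit := split_02
      (f := fun x => (Set.indicator (Ioo (0:ℝ) 1) W₁ x + Set.indicator (Ioo (1:ℝ) 2) W₂ x)^2)
      (fun x => sq_nonneg _)
    have hEn : energySq β δ
        (fun x => Set.indicator (Ioo (0:ℝ) 1) W₁ x + Set.indicator (Ioo (1:ℝ) 2) W₂ x)
        (fun x => Set.indicator (Ioo (0:ℝ) 1) W₁t x + Set.indicator (Ioo (1:ℝ) 2) W₂t x)
        ≤ KW * ε^((5:ℝ)) := by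
      simp only [energySq]
      have I1 : ∫ x in (0:ℝ)..2,
          (Set.indicator (Ioo (0:ℝ) 1) W₁t x + Set.indicator (Ioo (1:ℝ) 2) W₂t x)^2
          ≤ (4*C₀^2/β)*ε^((5:ℝ)) := by linarith
      have I2 : ∫ x in (0:ℝ)..2, (deriv (fun x => Set.indicator (Ioo (0:ℝ) 1) W₁ x
          + Set.indicator (Ioo (1:ℝ) 2) W₂ x) x)^2 ≤ (4*C₀^2/β)*ε^((5:ℝ)) := by linarith
      have I3 : ∫ x in (0:ℝ)..2,
          (Set.indicator (Ioo (0:ℝ) 1) W₁ x + Set.indicator (Ioo (1:ℝ) 2) W₂ x)^2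
          ≤ (4*C₀^2/β)*ε^((5:ℝ)) := by
        have h7 : ∫ x in (0:ℝ)..2,
            (Set.indicator (Ioo (0:ℝ) 1) W₁ x + Set.indicator (Ioo (1:ℝ) 2) W₂ x)^2
            ≤ (4*C₀^2/β)*ε^((7:ℝ)) := by linarith
        exact h7.trans (mul_le_mul_of_nonneg_left qc (by positivity))
      have t2 := mul_le_mul_of_nonneg_left I2 (by positivity : (0:ℝ) ≤ β^2/2)
      have t3 := mul_le_mul_of_nonneg_left I3 hδ.le
      have heq : (4*C₀^2/β)*ε^((5:ℝ)) + β^2/2*((4*C₀^2/β)*ε^((5:ℝ)))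
          + δ*((4*C₀^2/β)*ε^((5:ℝ))) = KW * ε^((5:ℝ)) := by
        rw [hKW]
        field_simp
        ring
      linarith
    exact sqrt_pow_le hEn hKWnn hε (by norm_num) (by linarith)
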